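/- Two minimal words of a configuration are either disjoint or nested: if x[n,m] and x[n',m'] are minimal words of x ∈ {0,1}^ℤ with m < m', then either m < n' or n' < n. -/

import Mathlib

/-- x[n,m] is a minimal word: exactly half its entries are ones, it ends
with a one, and every proper suffix segment has strictly more ones than zeros. -/
def IsMinimalWord (x : ℤ → ℕ) (n m : ℤ) : Prop :=
  n ≤ m ∧ x m = 1 ∧
  2 * (∑ i ∈ Finset.Icc n m, (x i : ℤ)) = m - n + 1 ∧
  ∀ k : ℤ, n < k → k ≤ m → 2 * (∑ i ∈ Finset.Icc k m, (x i : ℤ)) > m - k + 1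

/-- Two minimal words are either disjoint or nested: if x[n,m] and x[n',m']
are minimal words with m < m', then either m < n' or n' < n. -/
theorem minimal_words_disjoint_or_nested (x : ℤ → ℕ) (hx : ∀ i, x i ≤ 1)
    (n m n' m' : ℤ) (h1 : IsMinimalWord x n m) (h2 : IsMinimalWord x n' m')
    (h : m < m') :
    m < n' ∨ n' < n := by
  by_contra hc
  push_neg at hc
  obtain ⟨hn'm, hnn'⟩ := hc
  obtain ⟨h1le, hxm, h1sum, h1min⟩ := h1
  obtain ⟨h2le, hxm', h2sum, h2min⟩ := h2
  have hA : 2 * (∑ i ∈ Finset.Icc n' m, (x i : ℤ)) ≥ m - n' + 1 := by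
    rcases eq_or_lt_of_le hnn' with he | hlt
    · subst he; linarith [h1sum]
    · exact le_of_lt (h1min n' hlt hn'm)
  have hB := h2min (m + 1) (by omega) (by omega)
  have hsplit : (∑ i ∈ Finset.Icc n' m', (x i : ℤ)) =
      (∑ i ∈ Finset.Icc n' m, (x i : ℤ)) + ∑ i ∈ Finset.Icc (m + 1) m', (x i : ℤ) := by
    have hu : Finset.Icc n' m' = Finset.Icc n' m ∪ Finset.Icc (m + 1) m' :=
      by ext i; simp [Finset.mem_Icc, Finset.mem_union]; omega
    rw [hu, Finset.sum_union (by
      simp [Finset.disjoint_left, Finset.mem_Icc]; omega)]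
  linarith [hA, hB, h2sum, hsplit]
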